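/- Let G=(V,E) be a finite connected graph with positive vertex measure μ and positive symmetric edge weights w, let n≥1 be an integer, let c<0, and let h:V→ℝ satisfy h(x)<0 for all x∈V. Then the equation −Δu = h(x)(1 − 1/(1+u^{2n})) e^u − c has at least one solution u:V→ℝ. -/

import Mathlib

open Filter intervalIntegral

noncomputable def stmt18g (n : ℕ) (t : ℝ) : ℝ := (1 - 1 / (1 + t ^ (2 * n))) * Real.exp t

lemma stmt18_pow_pos (n : ℕ) (t : ℝ) : 0 < 1 + t ^ (2 * n) := by
  have h1 : t ^ (2 * n) = (t ^ 2) ^ n := by rw [pow_mul]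
  have := pow_nonneg (sq_nonneg t) n
  rw [h1]; linarith

lemma stmt18_g_nonneg (n : ℕ) (t : ℝ) : 0 ≤ stmt18g n t := by
  have h := stmt18_pow_pos n t
  have h2 : 1 / (1 + t ^ (2 * n)) ≤ 1 := by
    rw [div_le_one h]
    have h1 : t ^ (2 * n) = (t ^ 2) ^ n := by rw [pow_mul]
    have := pow_nonneg (sq_nonneg t) n
    rw [h1]; linarith
  exact mul_nonneg (by linarith) (Real.exp_nonneg t)

lemma stmt18_g_le (n : ℕ) (t : ℝ) : stmt18g n t ≤ Real.exp t := by
  have h := stmt18_pow_pos n t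
  have h2 : 0 ≤ 1 / (1 + t ^ (2 * n)) := by positivity
  unfold stmt18g
  nlinarith [Real.exp_pos t]

lemma stmt18_g_ge (n : ℕ) {t : ℝ} (ht : 1 ≤ t) : Real.exp t / 2 ≤ stmt18g n t := by
  have h := stmt18_pow_pos n t
  have hpow : 1 ≤ t ^ (2 * n) := one_le_pow₀ ht
  have h2 : 1 / (1 + t ^ (2 * n)) ≤ 1 / 2 := by
    rw [div_le_div_iff₀ h two_pos]; linarith
  unfold stmt18g
  have := Real.exp_pos t
  nlinarith

lemma stmt18_exp_ge {t : ℝ} (ht : 0 ≤ t) : t ^ 2 / 4 ≤ Real.exp t := by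
  have h1 : t / 2 + 1 ≤ Real.exp (t / 2) := by
    have := Real.add_one_le_exp (t / 2); linarith
  have h2 : Real.exp t = Real.exp (t / 2) ^ 2 := by
    rw [← Real.exp_nat_mul]; ring_nf
  nlinarith [Real.exp_pos (t/2)]

noncomputable def stmt18fnl (n : ℕ) (c a t : ℝ) : ℝ := a * stmt18g n t - c

lemma stmt18_g_cont (n : ℕ) : Continuous (stmt18g n) := by
  unfold stmt18g
  have : Continuous fun t : ℝ => 1 / (1 + t ^ (2 * n)) :=
    continuous_const.div (by continuity) fun t => (stmt18_pow_pos n t).ne'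
  continuity

lemma stmt18_fnl_cont (n : ℕ) (c a : ℝ) : Continuous (stmt18fnl n c a) := by
  unfold stmt18fnl
  exact (continuous_const.mul (stmt18_g_cont n)).sub continuous_const

noncomputable def stmt18Fnl (n : ℕ) (c a t : ℝ) : ℝ :=
  ∫ s in (0:ℝ)..t, stmt18fnl n c a s

lemma stmt18_Fnl_deriv (n : ℕ) (c a t : ℝ) :
    HasDerivAt (stmt18Fnl n c a) (stmt18fnl n c a t) t :=
  intervalIntegral.integral_hasDerivAt_right
    ((stmt18_fnl_cont n c a).intervalIntegrable _ _)
    ((stmt18_fnl_cont n c a).aestronglyMeasurable.stronglyMeasurableAtFilter)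
    (stmt18_fnl_cont n c a).continuousAt

lemma stmt18_Fnl_cont (n : ℕ) (c a : ℝ) : Continuous (stmt18Fnl n c a) :=
  continuous_iff_continuousAt.2 fun t => (stmt18_Fnl_deriv n c a t).continuousAt

lemma stmt18_Fnl_le_neg (n : ℕ) {c a : ℝ} (ha : a < 0) {t : ℝ} (ht : t ≤ 0) :
    stmt18Fnl n c a t ≤ -a - c * t := by
  have hint1 : IntervalIntegrable (stmt18fnl n c a) MeasureTheory.volume t 0 :=
    (stmt18_fnl_cont n c a).intervalIntegrable _ _
  have hint2 : IntervalIntegrable (fun s => a * Real.exp s - c) MeasureTheory.volume t 0 :=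
    (by continuity : Continuous fun s : ℝ => a * Real.exp s - c).intervalIntegrable _ _
  have hmono : (∫ s in t..(0:ℝ), (a * Real.exp s - c)) ≤ ∫ s in t..(0:ℝ), stmt18fnl n c a s := by
    apply intervalIntegral.integral_mono_on ht hint2 hint1
    intro s _
    unfold stmt18fnl
    have := stmt18_g_le n s
    nlinarith [stmt18_g_le n s]
  have hcomp : (∫ s in t..(0:ℝ), (a * Real.exp s - c)) = a * (1 - Real.exp t) - c * (0 - t) := by
    rw [intervalIntegral.integral_sub ((by continuity : Continuous fun s : ℝ => a * Real.exp s).intervalIntegrable _ _) (intervalIntegrable_const),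
      intervalIntegral.integral_const_mul, integral_exp, intervalIntegral.integral_const]
    simp [Real.exp_zero]; ring
  have hsymm : stmt18Fnl n c a t = -(∫ s in t..(0:ℝ), stmt18fnl n c a s) := by
    rw [stmt18Fnl, intervalIntegral.integral_symm]
  have hexp : 0 < Real.exp t := Real.exp_pos t
  rw [hsymm]
  nlinarith [hmono, hcomp.symm ▸ hmono]
open Filter intervalIntegral

lemma stmt18_Fnl_le_pos (n : ℕ) {c a : ℝ} (ha : a < 0) {t : ℝ} (ht : 1 ≤ t) :
    stmt18Fnl n c a t ≤ a / 8 * t ^ 2 - c * t - a * Real.exp 1 / 2 := by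
  have hcont := stmt18_fnl_cont n c a
  have hsplit : stmt18Fnl n c a t
      = (∫ s in (0:ℝ)..1, stmt18fnl n c a s) + ∫ s in (1:ℝ)..t, stmt18fnl n c a s := by
    rw [stmt18Fnl, ← intervalIntegral.integral_add_adjacent_intervals
      (hcont.intervalIntegrable 0 1) (hcont.intervalIntegrable 1 t)]
  have h01 : (∫ s in (0:ℝ)..1, stmt18fnl n c a s) ≤ ∫ s in (0:ℝ)..1, (0 - c : ℝ) := by
    apply intervalIntegral.integral_mono_on zero_le_one (hcont.intervalIntegrable _ _)
      (intervalIntegrable_const)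
    intro s _
    unfold stmt18fnl
    nlinarith [stmt18_g_nonneg n s]
  have h01' : (∫ s in (0:ℝ)..1, (0 - c : ℝ)) = -c := by simp
  have h1t : (∫ s in (1:ℝ)..t, stmt18fnl n c a s)
      ≤ ∫ s in (1:ℝ)..t, (a * (Real.exp s / 2) - c) := by
    apply intervalIntegral.integral_mono_on ht (hcont.intervalIntegrable _ _)
      ((by continuity : Continuous fun s : ℝ => a * (Real.exp s / 2) - c).intervalIntegrable _ _)
    intro s hs
    unfold stmt18fnl
    have := stmt18_g_ge n hs.1
    nlinarith
  have hval : (∫ s in (1:ℝ)..t, (a * (Real.exp s / 2) - c))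
      = a * ((Real.exp t - Real.exp 1) / 2) - c * (t - 1) := by
    have : (fun s : ℝ => a * (Real.exp s / 2) - c) = fun s : ℝ => (a / 2) * Real.exp s - c := by
      funext s; ring
    rw [this, intervalIntegral.integral_sub
      ((by continuity : Continuous fun s : ℝ => (a/2) * Real.exp s).intervalIntegrable _ _)
      intervalIntegrable_const,
      intervalIntegral.integral_const_mul, integral_exp, intervalIntegral.integral_const]
    simp; ring
  have hexp : t ^ 2 / 4 ≤ Real.exp t := stmt18_exp_ge (by linarith)
  nlinarith [hsplit, h01, h1t, hval]

lemma stmt18_coercive (n : ℕ) {c a m : ℝ} (ha : a < 0) (hc : c < 0) (hm : 0 < m) :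
    Tendsto (fun t => -m * stmt18Fnl n c a t) (cocompact ℝ) atTop := by
  rw [cocompact_eq_atBot_atTop]
  refine Tendsto.sup ?_ ?_
  · -- atBot
    apply tendsto_atTop_mono' _ ?_ ?_
    · exact fun t => m * a + (m * c) * t
    · filter_upwards [eventually_le_atBot (0:ℝ)] with t ht
      have := stmt18_Fnl_le_neg n (c := c) ha ht
      nlinarith
    · apply tendsto_atTop_add_const_left
      exact (tendsto_const_mul_atTop_of_neg (by nlinarith : m * c < 0)).2 tendsto_id
  · -- atTop
    apply tendsto_atTop_mono' _ ?_ ?_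
    · exact fun t => ((-m * (a / 8)) * t + m * c) * t + m * (a * Real.exp 1 / 2)
    · filter_upwards [eventually_ge_atTop (1:ℝ)] with t ht
      have := stmt18_Fnl_le_pos n (c := c) ha ht
      nlinarith
    · apply tendsto_atTop_add_const_right
      apply Tendsto.atTop_mul_atTop₀ _ tendsto_id
      apply tendsto_atTop_add_const_right
      exact (tendsto_const_mul_atTop_of_pos (by nlinarith : 0 < -m * (a/8))).2 tendsto_id

lemma stmt18_cocompact_bound {φ : ℝ → ℝ} (h : Tendsto φ (cocompact ℝ) atTop) (b : ℝ) :
    ∃ R, ∀ t : ℝ, R < |t| → b ≤ φ t := by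
  have hev := h.eventually (eventually_ge_atTop b)
  rw [hasBasis_cocompact.eventually_iff] at hev
  obtain ⟨K, hK, hKb⟩ := hev
  obtain ⟨R, hR⟩ := hK.isBounded.subset_closedBall 0
  refine ⟨R, fun t ht => hKb fun hmem => ?_⟩
  have := hR hmem
  rw [Metric.mem_closedBall, dist_zero_right, Real.norm_eq_abs] at this
  linarith

open Filter Metric in
/-- If `c < 0` and `h < 0` on `V`, then the equation
`-Δu = h (1 - 1/(1+u^(2n))) e^u - c` has at least one solution on a finite
connected graph. -/
theorem stmt18 {V : Type*} [Fintype V] [Nonempty V]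
    (G : SimpleGraph V) [DecidableRel G.Adj] (hconn : G.Connected)
    (μ : V → ℝ) (hμ : ∀ x, 0 < μ x)
    (w : V → V → ℝ) (hwsymm : ∀ x y, w x y = w y x)
    (hwpos : ∀ x y, G.Adj x y → 0 < w x y)
    (n : ℕ) (hn : 1 ≤ n) (c : ℝ) (hc : c < 0)
    (h : V → ℝ) (hh : ∀ x, h x < 0) :
    ∃ u : V → ℝ, ∀ x,
      -((1 / μ x) * ∑ y ∈ G.neighborFinset x, w x y * (u y - u x))
        = h x * (1 - 1 / (1 + (u x) ^ (2 * n))) * Real.exp (u x) - c := by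
  classical
  set φ : V → ℝ → ℝ := fun x t => -(μ x) * stmt18Fnl n c (h x) t with hφdef
  set D : (V → ℝ) → ℝ := fun u => ∑ x, ∑ y ∈ G.neighborFinset x, w x y * (u y - u x) ^ 2
    with hDdef
  set J : (V → ℝ) → ℝ := fun u => D u / 4 + ∑ x, φ x (u x) with hJdef
  have hDcont : Continuous D := by
    apply continuous_finset_sum; intro x _
    apply continuous_finset_sum; intro y _
    exact continuous_const.mul (((continuous_apply y).sub (continuous_apply x)).pow 2)
  have hφcont : ∀ x : V, Continuous (φ x) := fun x =>
    continuous_const.mul (stmt18_Fnl_cont n c (h x))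
  have hJcont : Continuous J :=
    (hDcont.div_const 4).add
      (continuous_finset_sum _ fun x _ => (hφcont x).comp (continuous_apply x))
  have hDnonneg : ∀ u : V → ℝ, 0 ≤ D u := by
    intro u
    apply Finset.sum_nonneg; intro x _
    apply Finset.sum_nonneg; intro y hy
    exact mul_nonneg (hwpos x y ((SimpleGraph.mem_neighborFinset G x y).1 hy)).le (sq_nonneg _)
  have hφten : ∀ x : V, Tendsto (φ x) (cocompact ℝ) atTop := fun x =>
    stmt18_coercive n (hh x) hc (hμ x)
  have hminex : ∀ x : V, ∃ t, ∀ s, φ x t ≤ φ x s := fun x =>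
    (hφcont x).exists_forall_le (hφten x)
  choose tm htm using hminex
  set mv : V → ℝ := fun x => φ x (tm x) with hmv
  set S : ℝ := ∑ x, mv x with hS
  have hJcoer : Tendsto J (cocompact (V → ℝ)) atTop := by
    rw [Filter.tendsto_atTop]
    intro b
    choose R hR using fun x => stmt18_cocompact_bound (hφten x) (b - S + mv x)
    set R0 : ℝ := max 0 (Finset.univ.sup' Finset.univ_nonempty R) with hR0
    rw [hasBasis_cocompact.eventually_iff]
    refine ⟨Metric.closedBall 0 R0, isCompact_closedBall _ _, fun u hu => ?_⟩
    have hx : ∃ x0 : V, R0 < |u x0| := by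
      by_contra hcon
      push_neg at hcon
      apply hu
      rw [Metric.mem_closedBall, dist_zero_right,
        pi_norm_le_iff_of_nonneg (le_max_left 0 _)]
      intro x; rw [Real.norm_eq_abs]; exact hcon x
    obtain ⟨x0, hx0⟩ := hx
    have h1 : b - S + mv x0 ≤ φ x0 (u x0) := by
      apply hR
      calc R x0 ≤ Finset.univ.sup' Finset.univ_nonempty R :=
            Finset.le_sup' R (Finset.mem_univ x0)
        _ ≤ R0 := le_max_right _ _
        _ < |u x0| := hx0
    have h2 : ∑ x ∈ Finset.univ.erase x0, mv x ≤ ∑ x ∈ Finset.univ.erase x0, φ x (u x) :=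
      Finset.sum_le_sum fun x _ => htm x (u x)
    have h3 : φ x0 (u x0) + ∑ x ∈ Finset.univ.erase x0, φ x (u x) = ∑ x, φ x (u x) :=
      Finset.add_sum_erase Finset.univ (fun x => φ x (u x)) (Finset.mem_univ x0)
    have h4 : mv x0 + ∑ x ∈ Finset.univ.erase x0, mv x = S :=
      Finset.add_sum_erase Finset.univ mv (Finset.mem_univ x0)
    have h5 := hDnonneg u
    have : J u = D u / 4 + ∑ x, φ x (u x) := rfl
    rw [this]
    linarith
  obtain ⟨u, hu⟩ := hJcont.exists_forall_le hJcoer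
  refine ⟨u, fun x0 => ?_⟩
  -- Euler-Lagrange
  set q : ℝ → ℝ := fun t => J (Function.update u x0 t) with hq
  have hqmin : IsLocalMin q (u x0) := by
    apply Filter.Eventually.of_forall
    intro t
    show q (u x0) ≤ q t
    rw [hq]
    simp only [Function.update_eq_self]
    exact hu _
  set dd : V → ℝ := fun z => if z = x0 then (1:ℝ) else 0 with hdd
  have h1 : ∀ x y : V,
      HasDerivAt (fun t => Function.update u x0 t y - Function.update u x0 t x)
        (dd y - dd x) (u x0) := by
    intro x y
    have e : (fun t => Function.update u x0 t y - Function.update u x0 t x)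
        = fun t => (if y = x0 then t else u y) - (if x = x0 then t else u x) := by
      funext t; simp [Function.update_apply]
    rw [e]
    have hdd' : dd y - dd x = (if y = x0 then (1:ℝ) else 0) - (if x = x0 then (1:ℝ) else 0) := by
      simp [hdd]
    rw [hdd']
    by_cases hy : y = x0 <;> by_cases hx : x = x0 <;>
      simp only [if_pos, if_neg, hy, hx, ite_true, ite_false]
    · exact (hasDerivAt_id (u x0)).sub (hasDerivAt_id (u x0))
    · simpa using (hasDerivAt_id (u x0)).sub_const (u x)
    · simpa using (hasDerivAt_id (u x0)).const_sub (u y)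
    · simpa using hasDerivAt_const (u x0) (u y - u x)
  have hterm : ∀ x y : V,
      HasDerivAt (fun t => w x y * (Function.update u x0 t y - Function.update u x0 t x) ^ 2)
        (w x y * (2 * (u y - u x) * (dd y - dd x))) (u x0) := by
    intro x y
    have h2 := ((h1 x y).fun_pow 2).const_mul (w x y)
    simp only [Function.update_eq_self] at h2
    refine h2.congr_deriv ?_
    ring
  have hDder : HasDerivAt (fun t => D (Function.update u x0 t))
      (∑ x, ∑ y ∈ G.neighborFinset x, w x y * (2 * (u y - u x) * (dd y - dd x))) (u x0) := by
    apply HasDerivAt.fun_sum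
    intro x _
    exact HasDerivAt.fun_sum fun y _ => hterm x y
  have hA : (∑ x, ∑ y ∈ G.neighborFinset x, w x y * (2 * (u y - u x) * (dd y - dd x)))
      = -(4 * ∑ y ∈ G.neighborFinset x0, w x0 y * (u y - u x0)) := by
    have hsplit : ∀ x y : V, w x y * (2 * (u y - u x) * (dd y - dd x))
        = (if y = x0 then 2 * w x y * (u y - u x) else 0)
          - (if x = x0 then 2 * w x y * (u y - u x) else 0) := by
      intro x y
      simp only [hdd]
      by_cases hy : y = x0 <;> by_cases hx : x = x0 <;> simp [hy, hx] <;> ring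
    simp_rw [hsplit, Finset.sum_sub_distrib]
    have hT1 : (∑ x : V, ∑ y ∈ G.neighborFinset x, if y = x0 then 2 * w x y * (u y - u x) else 0)
        = ∑ x ∈ G.neighborFinset x0, 2 * w x x0 * (u x0 - u x) := by
      have e1 : ∀ x : V, (∑ y ∈ G.neighborFinset x, if y = x0 then 2 * w x y * (u y - u x) else 0)
          = if x0 ∈ G.neighborFinset x then 2 * w x x0 * (u x0 - u x) else 0 :=
        fun x => Finset.sum_ite_eq' (G.neighborFinset x) x0 _
      simp_rw [e1]
      have e2 : ∀ x : V, (x0 ∈ G.neighborFinset x) = (x ∈ G.neighborFinset x0) := by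
        intro x
        simp [SimpleGraph.mem_neighborFinset, G.adj_comm]
      simp_rw [e2]
      rw [← Finset.sum_filter]
      congr 1
      ext x
      simp
    have hT2 : (∑ x : V, ∑ y ∈ G.neighborFinset x, if x = x0 then 2 * w x y * (u y - u x) else 0)
        = ∑ y ∈ G.neighborFinset x0, 2 * w x0 y * (u y - u x0) := by
      rw [Finset.sum_eq_single x0]
      · simp
      · intro x _ hxne
        apply Finset.sum_eq_zero
        intro y _
        rw [if_neg hxne]
      · intro hcon
        exact absurd (Finset.mem_univ x0) hcon
    rw [hT1, hT2]
    rw [← Finset.sum_sub_distrib, Finset.mul_sum, ← Finset.sum_neg_distrib]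
    apply Finset.sum_congr rfl
    intro y _
    rw [hwsymm y x0]
    ring
  have hPder : HasDerivAt (fun t => ∑ x, φ x (Function.update u x0 t x))
      (-(μ x0) * stmt18fnl n c (h x0) (u x0)) (u x0) := by
    have hder : HasDerivAt (fun t => ∑ x, φ x (Function.update u x0 t x))
        (∑ x : V, if x = x0 then -(μ x0) * stmt18fnl n c (h x0) (u x0) else 0) (u x0) := by
      apply HasDerivAt.fun_sum
      intro x _
      by_cases hx : x = x0
      · subst hx
        simp only [Function.update_self, if_pos]
        exact (stmt18_Fnl_deriv n c (h x) (u x)).const_mul (-(μ x))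
      · simp only [Function.update_of_ne hx, if_neg hx]
        exact hasDerivAt_const _ _
    rwa [Finset.sum_ite_eq' Finset.univ x0 _, if_pos (Finset.mem_univ x0)] at hder
  have hqder : HasDerivAt q
      ((-(4 * ∑ y ∈ G.neighborFinset x0, w x0 y * (u y - u x0))) / 4
        + -(μ x0) * stmt18fnl n c (h x0) (u x0)) (u x0) := by
    rw [← hA]
    exact (hDder.div_const 4).add hPder
  have hzero := hqmin.hasDerivAt_eq_zero hqder
  have hgoal : stmt18fnl n c (h x0) (u x0)
      = h x0 * (1 - 1 / (1 + (u x0) ^ (2 * n))) * Real.exp (u x0) - c := by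
    simp [stmt18fnl, stmt18g]; ring
  rw [← hgoal]
  have hμ0 : μ x0 ≠ 0 := (hμ x0).ne'
  field_simp at hzero ⊢
  linarith
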